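/- (Discrete version of the von Neumann uniqueness theorem.) Let n ≥ 1, ζ = exp(2πi/n), and let A and B be n×n unitary matrices satisfying A·B = ζ^j·B·A where gcd(j, n) = 1. Then there exist an n×n unitary matrix S and complex numbers c₁, c₂ with |c₁| = |c₂| = 1 such that S·A·S^{−1} = c₁·U^j and S·B·S^{−1} = c₂·V, where U, V is the Weyl pair in dimension n. -/

import Mathlib

open Matrix

/-- The primitive `n`-th root of unity `ζ = exp(2πi/n)`. -/
noncomputable def zeta (n : ℕ) : ℂ := Complex.exp (2 * Real.pi * Complex.I / n)

/-- The cyclic shift matrix `U` of the Weyl pair: `U i j = 1` iff `j ≡ i + 1 (mod n)`. -/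
def weylU (n : ℕ) : Matrix (Fin n) (Fin n) ℂ :=
  Matrix.of fun i j => if ((i : ℕ) + 1) % n = (j : ℕ) then 1 else 0

/-- The diagonal matrix `V` of the Weyl pair: `V k k = ζ^k`. -/
noncomputable def weylV (n : ℕ) : Matrix (Fin n) (Fin n) ℂ :=
  Matrix.diagonal fun k => zeta n ^ (k : ℕ)

lemma weylU_pow {n : ℕ} (hn : 1 ≤ n) (m : ℕ) (i l : Fin n) :
    (weylU n ^ m) i l = if ((i : ℕ) + m) % n = (l : ℕ) then 1 else 0 := by
  induction m generalizing l with
  | zero =>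
    simp only [pow_zero, one_apply, add_zero, Nat.mod_eq_of_lt i.isLt, Fin.val_inj]
  | succ m ih =>
    rw [pow_succ, mul_apply]
    have hlt : ((i : ℕ) + m) % n < n := Nat.mod_lt _ (by omega)
    rw [Finset.sum_eq_single (⟨((i:ℕ)+m) % n, hlt⟩ : Fin n)]
    · rw [ih ⟨((i:ℕ)+m) % n, hlt⟩, weylU]
      simp only [of_apply]
      rw [if_pos trivial, one_mul, Nat.mod_add_mod, ← add_assoc]
    · intro b _ hb
      rw [ih b, if_neg, zero_mul]
      intro h
      exact hb (Fin.ext h.symm)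
    · intro h; exact absurd (Finset.mem_univ _) h

lemma inner_mulVec {n : ℕ} {M : Matrix (Fin n) (Fin n) ℂ} (hM : Mᴴ * M = 1)
    (x y : Fin n → ℂ) : star (M *ᵥ x) ⬝ᵥ (M *ᵥ y) = star x ⬝ᵥ y := by
  rw [star_mulVec, dotProduct_mulVec, vecMul_vecMul, hM, vecMul_one]

lemma ortho {n : ℕ} {B : Matrix (Fin n) (Fin n) ℂ} (hB : Bᴴ * B = 1) {x y : Fin n → ℂ}
    {α β : ℂ} (hx : B *ᵥ x = α • x) (hy : B *ᵥ y = β • y)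
    (hαβ : (starRingEnd ℂ) α * β ≠ 1) : star x ⬝ᵥ y = 0 := by
  have h := inner_mulVec hB x y
  rw [hx, hy, star_smul, smul_dotProduct, dotProduct_smul] at h
  have h' : ((starRingEnd ℂ) α * β) * (star x ⬝ᵥ y) = star x ⬝ᵥ y := by
    simpa [smul_eq_mul, Complex.star_def, mul_assoc] using h
  have : ((starRingEnd ℂ) α * β - 1) * (star x ⬝ᵥ y) = 0 := by
    rw [sub_mul, one_mul, h', sub_self]
  rcases mul_eq_zero.mp this with h' | h'
  · exact absurd (by linear_combination h') hαβ
  · exact h'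

lemma abs_eq_one_of_conj_mul {z : ℂ} (h : (starRingEnd ℂ) z * z = 1) :
    ‖z‖ = 1 := by
  have h2 : (Complex.normSq z : ℂ) = 1 := by
    rw [Complex.normSq_eq_conj_mul_self]; exact h
  have h3 : Complex.normSq z = 1 := by exact_mod_cast h2
  rw [Complex.norm_def, h3, Real.sqrt_one]

lemma exists_unit_eigenvector {n : ℕ} (hn : 1 ≤ n) (B : Matrix (Fin n) (Fin n) ℂ) :
    ∃ (l : ℂ) (v : Fin n → ℂ), B *ᵥ v = l • v ∧ star v ⬝ᵥ v = 1 := by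
  haveI : Nonempty (Fin n) := ⟨⟨0, hn⟩⟩
  obtain ⟨c, hc⟩ := Module.End.exists_eigenvalue (Matrix.mulVecLin B)
  obtain ⟨v₀, hv₀⟩ := hc.exists_hasEigenvector
  have heig : B *ᵥ v₀ = c • v₀ := hv₀.apply_eq_smul
  have hv₀ne : v₀ ≠ 0 := hv₀.right
  set r : ℝ := ∑ a, Complex.normSq (v₀ a) with hr
  have hdot : star v₀ ⬝ᵥ v₀ = (r : ℂ) := by
    simp only [dotProduct, Pi.star_apply, hr]
    push_cast
    refine Finset.sum_congr rfl fun a _ => ?_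
    simp [Complex.normSq_eq_conj_mul_self, Complex.star_def]
  have hrpos : 0 < r := by
    obtain ⟨a, ha⟩ := Function.ne_iff.mp hv₀ne
    refine Finset.sum_pos' (fun b _ => Complex.normSq_nonneg _) ⟨a, Finset.mem_univ a, ?_⟩
    exact Complex.normSq_pos.mpr ha
  refine ⟨c, ((Real.sqrt r)⁻¹ : ℝ) • v₀, ?_, ?_⟩
  · rw [mulVec_smul, heig, smul_comm]
  · rw [star_smul, smul_dotProduct, dotProduct_smul, hdot]
    simp only [star_trivial, Complex.star_def, Complex.conj_ofReal, smul_eq_mul]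
    rw [smul_smul, Complex.real_smul]
    norm_cast
    rw [← mul_inv, Real.mul_self_sqrt hrpos.le]
    exact inv_mul_cancel₀ hrpos.ne'

/-- Discrete version of the von Neumann uniqueness theorem: if `A`, `B` are
unitary with `A * B = ζ^j • (B * A)` and `gcd(j, n) = 1`, then there is a
unitary `S` conjugating `A` to `c₁ • U^j` and `B` to `c₂ • V`, with `|c₁| = |c₂| = 1`. -/
theorem stmt8 {n : ℕ} (hn : 1 ≤ n) (j : ℕ) (hj : Nat.gcd j n = 1)
    (A B : Matrix (Fin n) (Fin n) ℂ) (hA : A * Aᴴ = 1) (hB : B * Bᴴ = 1)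
    (hcomm : A * B = zeta n ^ j • (B * A)) :
    ∃ (S : Matrix (Fin n) (Fin n) ℂ) (c₁ c₂ : ℂ),
      S * Sᴴ = 1 ∧ ‖c₁‖ = 1 ∧ ‖c₂‖ = 1 ∧
      S * A * Sᴴ = c₁ • weylU n ^ j ∧ S * B * Sᴴ = c₂ • weylV n := by
  have hn0 : n ≠ 0 := by omega
  set ζ := zeta n with hζdef
  have hζ : IsPrimitiveRoot ζ n := Complex.isPrimitiveRoot_exp n hn0
  have hζne : ζ ≠ 0 := Complex.exp_ne_zero _
  have hζabs : ‖ζ‖ = 1 := by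
    rw [hζdef, zeta]
    have h : 2 * (Real.pi : ℂ) * Complex.I / n = ((2 * Real.pi / n : ℝ) : ℂ) * Complex.I := by
      push_cast; ring
    rw [h, Complex.norm_exp_ofReal_mul_I]
  have hζnsq : Complex.normSq ζ = 1 := by rw [← Complex.sq_norm, hζabs]; norm_num
  have hζmul : (starRingEnd ℂ) ζ * ζ = 1 := by
    rw [← Complex.normSq_eq_conj_mul_self, hζnsq, Complex.ofReal_one]
  have hζstar : (starRingEnd ℂ) ζ = ζ⁻¹ := eq_inv_of_mul_eq_one_left hζmul
  have hA' : Aᴴ * A = 1 := mul_eq_one_comm.mp hA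
  have hB' : Bᴴ * B = 1 := mul_eq_one_comm.mp hB
  have hBA : B * A = (ζ⁻¹) ^ j • (A * B) := by
    rw [hcomm, smul_smul, ← mul_pow, inv_mul_cancel₀ hζne, one_pow, one_smul]
  -- unit eigenvector of B
  obtain ⟨lam, v, hv, hvv⟩ := exists_unit_eigenvector hn B
  -- powers of A are unitary
  have hApow : ∀ m : ℕ, (A ^ m)ᴴ * (A ^ m) = 1 := by
    intro m
    induction m with
    | zero => simp
    | succ m ih =>
      rw [pow_succ, conjTranspose_mul, Matrix.mul_assoc, ← Matrix.mul_assoc ((A ^ m)ᴴ), ih,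
        Matrix.one_mul, hA']
  have hps : ∀ m : ℕ, star (A ^ m *ᵥ v) ⬝ᵥ (A ^ m *ᵥ v) = 1 :=
    fun m => (inner_mulVec (hApow m) v v).trans hvv
  -- eigenvalue relation for the A-orbit of v
  have hBp : ∀ m : ℕ, B *ᵥ (A ^ m *ᵥ v) = (lam * (ζ⁻¹) ^ (j * m)) • (A ^ m *ᵥ v) := by
    intro m
    induction m with
    | zero => simpa using hv
    | succ m ih =>
      have hstep : A ^ (m + 1) *ᵥ v = A *ᵥ (A ^ m *ᵥ v) := by
        rw [mulVec_mulVec, ← pow_succ']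
      rw [hstep]
      have h1 : B *ᵥ (A *ᵥ (A ^ m *ᵥ v)) = ζ⁻¹ ^ j • (A *ᵥ (B *ᵥ (A ^ m *ᵥ v))) := by
        rw [mulVec_mulVec _ B A, mulVec_mulVec _ A B, hBA, smul_mulVec]
      rw [h1, ih, mulVec_smul, smul_smul]
      congr 1
      rw [Nat.mul_succ, pow_add]
      ring
  have hlam1 : (starRingEnd ℂ) lam * lam = 1 := by
    have h := inner_mulVec hB' v v
    rw [hv, star_smul, smul_dotProduct, dotProduct_smul, hvv] at h
    simpa [Complex.star_def, smul_eq_mul] using h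
  -- zeta powers determine exponents mod n
  have hzmod : ∀ a b : ℕ, ζ ^ (j * a) = ζ ^ (j * b) → a % n = b % n := by
    have key : ∀ a b : ℕ, a ≤ b → ζ ^ (j * a) = ζ ^ (j * b) → a % n = b % n := by
      intro a b hab h
      have hjb : j * b = j * a + j * (b - a) := by
        rw [← Nat.left_distrib, Nat.add_sub_cancel' hab]
      rw [hjb, pow_add] at h
      have h1 : ζ ^ (j * (b - a)) = 1 :=
        mul_left_cancel₀ (pow_ne_zero (j * a) hζne) (h.symm.trans (mul_one _).symm)
      have h2 : n ∣ j * (b - a) := (hζ.pow_eq_one_iff_dvd _).mp h1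
      have h3 : n ∣ (b - a) := (Nat.coprime_comm.mp hj).dvd_of_dvd_mul_left h2
      exact (Nat.modEq_iff_dvd' hab).mpr h3
    intro a b h
    rcases le_total a b with hab | hab
    · exact key a b hab h
    · exact (key b a hab h.symm).symm
  -- orthogonality of the orbit
  have horth : ∀ a b : ℕ, a % n ≠ b % n → star (A ^ a *ᵥ v) ⬝ᵥ (A ^ b *ᵥ v) = 0 := by
    intro a b hne
    refine ortho hB' (hBp a) (hBp b) ?_
    intro hcon
    apply hne
    apply hzmod
    rw [_root_.map_mul, map_pow, map_inv₀, hζstar, inv_inv] at hcon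
    have hstep : ζ ^ (j * a) * (ζ⁻¹) ^ (j * b) = 1 := by
      calc ζ ^ (j * a) * (ζ⁻¹) ^ (j * b)
          = ((starRingEnd ℂ) lam * lam) * (ζ ^ (j * a) * (ζ⁻¹) ^ (j * b)) := by
            rw [hlam1, one_mul]
        _ = ((starRingEnd ℂ) lam * ζ ^ (j * a)) * (lam * (ζ⁻¹) ^ (j * b)) := by ring
        _ = 1 := hcon
    rw [inv_pow] at hstep
    exact (mul_inv_eq_one₀ (pow_ne_zero _ hζne)).mp hstep
  have hpp : ∀ a b : ℕ, a < n → b < n →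
      star (A ^ a *ᵥ v) ⬝ᵥ (A ^ b *ᵥ v) = if a = b then 1 else 0 := by
    intro a b ha hb
    by_cases hab : a = b
    · subst hab; rw [if_pos rfl]; exact hps a
    · rw [if_neg hab]
      exact horth a b (by rwa [Nat.mod_eq_of_lt ha, Nat.mod_eq_of_lt hb])
  -- the matrix P of orbit vectors, and its unitarity
  set P : Matrix (Fin n) (Fin n) ℂ := Matrix.of (fun a q : Fin n => (A ^ (q : ℕ) *ᵥ v) a)
    with hPdef
  have hPP : Pᴴ * P = 1 := by
    ext q q'
    rw [mul_apply, one_apply]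
    have hsum : ∑ a, Pᴴ q a * P a q' = star (A ^ (q : ℕ) *ᵥ v) ⬝ᵥ (A ^ (q' : ℕ) *ᵥ v) := by
      simp [conjTranspose_apply, hPdef, dotProduct]
    rw [hsum, hpp _ _ q.isLt q'.isLt]
    simp [Fin.val_inj]
  have hPP' : P * Pᴴ = 1 := mul_eq_one_comm.mp hPP
  -- A^n v = μ v
  set μ : ℂ := star v ⬝ᵥ (A ^ n *ᵥ v) with hμdef
  have hAnv : A ^ n *ᵥ v = μ • v := by
    have hPw : Pᴴ *ᵥ (A ^ n *ᵥ v - μ • v) = 0 := by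
      ext q
      show ∑ a, Pᴴ q a * (A ^ n *ᵥ v - μ • v) a = 0
      have hsplit : ∑ a, Pᴴ q a * (A ^ n *ᵥ v - μ • v) a
          = star (A ^ (q : ℕ) *ᵥ v) ⬝ᵥ (A ^ n *ᵥ v)
            - μ * (star (A ^ (q : ℕ) *ᵥ v) ⬝ᵥ v) := by
        simp only [dotProduct, conjTranspose_apply, hPdef, Matrix.of_apply, Pi.sub_apply,
          Pi.smul_apply, smul_eq_mul, Pi.star_apply, Finset.mul_sum]
        rw [← Finset.sum_sub_distrib]
        apply Finset.sum_congr rfl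
        intro a _
        ring
      rw [hsplit]
      by_cases hq : (q : ℕ) = 0
      · have h1 : star (A ^ (q : ℕ) *ᵥ v) ⬝ᵥ (A ^ n *ᵥ v) = μ := by rw [hq]; simp [hμdef]
        have h2 : star (A ^ (q : ℕ) *ᵥ v) ⬝ᵥ v = 1 := by
          rw [hq]; simpa using hvv
        rw [h1, h2, mul_one, sub_self]
      · have h1 : star (A ^ (q : ℕ) *ᵥ v) ⬝ᵥ (A ^ n *ᵥ v) = 0 := by
          refine horth _ _ ?_
          rw [Nat.mod_eq_of_lt q.isLt, Nat.mod_self]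
          exact hq
        have h2 : star (A ^ (q : ℕ) *ᵥ v) ⬝ᵥ v = 0 := by
          have := hpp q 0 q.isLt (by omega)
          rw [if_neg hq] at this
          simpa using this
        rw [h1, h2, mul_zero, sub_zero]
    have hzero : A ^ n *ᵥ v - μ • v = 0 := by
      have h := congrArg (fun z => P *ᵥ z) hPw
      simpa [mulVec_mulVec, hPP', one_mulVec] using h
    linear_combination (norm := module) hzero
  have hμ1 : (starRingEnd ℂ) μ * μ = 1 := by
    have h := hps n
    rw [hAnv, star_smul, smul_dotProduct, dotProduct_smul, hvv] at h
    simpa [Complex.star_def, smul_eq_mul] using h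
  have hμne : μ ≠ 0 := by
    intro h; rw [h, mul_zero] at hμ1; exact zero_ne_one hμ1
  have hμabs : ‖μ‖ = 1 := abs_eq_one_of_conj_mul hμ1
  -- the n-th root c₁ of μ
  set c₁ : ℂ := Complex.exp (Complex.log μ / n) with hc₁def
  have hc₁n : c₁ ^ n = μ := by
    rw [hc₁def, ← Complex.exp_nat_mul, mul_div_cancel₀ _ (by exact_mod_cast hn0 : (n : ℂ) ≠ 0),
      Complex.exp_log hμne]
  have hc₁ne : c₁ ≠ 0 := Complex.exp_ne_zero _
  have hc₁abs : ‖c₁‖ = 1 := by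
    rw [hc₁def, Complex.norm_exp]
    have hcast : (n : ℂ) = ((n : ℝ) : ℂ) := by norm_cast
    rw [hcast, Complex.div_ofReal_re, Complex.log_re, hμabs, Real.log_one, zero_div, Real.exp_zero]
  have hc₁mul : (starRingEnd ℂ) c₁ * c₁ = 1 := by
    have hnsq : Complex.normSq c₁ = 1 := by rw [← Complex.sq_norm, hc₁abs]; norm_num
    rw [← Complex.normSq_eq_conj_mul_self, hnsq, Complex.ofReal_one]
  -- the index function k
  have hj'ex : ∃ j' : ℕ, (j * j') % n = 1 % n := by
    rcases eq_or_lt_of_le hn with h1 | h1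
    · exact ⟨0, by simp [← h1]⟩
    · obtain ⟨m, -, hm⟩ := Nat.exists_mul_mod_eq_one_of_coprime hj h1
      exact ⟨m, by rw [hm, Nat.mod_eq_of_lt h1]⟩
  obtain ⟨j', hj'⟩ := hj'ex
  set k : Fin n → ℕ := fun i => (j' * (n - (i : ℕ))) % n with hkdef
  have hklt : ∀ i, k i < n := fun i => Nat.mod_lt _ (by omega)
  have hk : ∀ i : Fin n, (j * k i + (i : ℕ)) % n = 0 := by
    intro i
    have hilt := i.isLt
    have hmain : j * k i + (i : ℕ) ≡ n [MOD n] := by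
      calc j * k i + (i : ℕ) ≡ j * (j' * (n - (i : ℕ))) + (i : ℕ) [MOD n] :=
            (Nat.ModEq.mul_left j (Nat.mod_modEq _ _)).add_right _
        _ = (j * j') * (n - (i : ℕ)) + (i : ℕ) := by ring
        _ ≡ 1 * (n - (i : ℕ)) + (i : ℕ) [MOD n] :=
            (Nat.ModEq.mul_right _ hj').add_right _
        _ = n := by omega
    rw [Nat.ModEq, Nat.mod_self] at hmain
    exact hmain
  have hdvdk : ∀ i : Fin n, n ∣ (j * k i + (i : ℕ)) := fun i => Nat.dvd_of_mod_eq_zero (hk i)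
  have hkinj : ∀ i i' : Fin n, k i = k i' → i = i' := by
    intro i i' h
    have d1 := hdvdk i
    have d2 := hdvdk i'
    rw [h] at d1
    rcases le_total (i : ℕ) (i' : ℕ) with hle | hle
    · have h3 : n ∣ ((j * k i' + (i' : ℕ)) - (j * k i' + (i : ℕ))) := Nat.dvd_sub d2 d1
      have h4 : (j * k i' + (i' : ℕ)) - (j * k i' + (i : ℕ)) = (i' : ℕ) - (i : ℕ) := by omega
      rw [h4] at h3
      have := Nat.eq_zero_of_dvd_of_lt h3
      have hi'lt := i'.isLt
      have hilt := i.isLt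
      exact Fin.ext (by omega)
    · have h3 : n ∣ ((j * k i' + (i : ℕ)) - (j * k i' + (i' : ℕ))) := Nat.dvd_sub d1 d2
      have h4 : (j * k i' + (i : ℕ)) - (j * k i' + (i' : ℕ)) = (i : ℕ) - (i' : ℕ) := by omega
      rw [h4] at h3
      have := Nat.eq_zero_of_dvd_of_lt h3
      have hi'lt := i'.isLt
      have hilt := i.isLt
      exact Fin.ext (by omega)
  -- the conjugating matrix T
  set T : Matrix (Fin n) (Fin n) ℂ :=
    Matrix.of (fun a i => c₁⁻¹ ^ (k i) * (A ^ (k i) *ᵥ v) a) with hTdef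
  have hTT : Tᴴ * T = 1 := by
    ext i i'
    rw [mul_apply, one_apply]
    have hsum : ∑ a, Tᴴ i a * T a i'
        = star (c₁⁻¹ ^ (k i)) * c₁⁻¹ ^ (k i')
          * (star (A ^ (k i) *ᵥ v) ⬝ᵥ (A ^ (k i') *ᵥ v)) := by
      simp only [conjTranspose_apply, hTdef, Matrix.of_apply, dotProduct, Pi.star_apply,
        Finset.mul_sum, star_mul']
      apply Finset.sum_congr rfl
      intro a _
      ring
    rw [hsum, hpp _ _ (hklt i) (hklt i')]
    by_cases h : i = i'
    · subst h
      rw [if_pos rfl, if_pos rfl, mul_one]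
      rw [star_pow, star_inv₀, Complex.star_def, ← mul_pow, ← mul_inv, hc₁mul, inv_one, one_pow]
    · rw [if_neg h, if_neg (fun hc => h (hkinj _ _ hc)), mul_zero]
  -- exponent relation for A-columns
  have hkrel : ∀ i i₀ : Fin n, ((i₀ : ℕ) + j) % n = (i : ℕ) → k i₀ = (k i + 1) % n := by
    intro i i₀ hi
    have e1 : (j * k i₀ + (i₀ : ℕ)) ≡ 0 [MOD n] := Nat.modEq_zero_iff_dvd.mpr (hdvdk i₀)
    have e2 : (j * k i + (i : ℕ)) ≡ 0 [MOD n] := Nat.modEq_zero_iff_dvd.mpr (hdvdk i)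
    have e3 : ((i₀ : ℕ) + j) ≡ (i : ℕ) [MOD n] := by
      show ((i₀ : ℕ) + j) % n = (i : ℕ) % n
      rw [hi, Nat.mod_eq_of_lt i.isLt]
    have e4 : j * (k i + 1) + (i₀ : ℕ) ≡ 0 [MOD n] := by
      have heq : j * (k i + 1) + (i₀ : ℕ) = j * k i + ((i₀ : ℕ) + j) := by ring
      rw [heq]
      calc j * k i + ((i₀ : ℕ) + j) ≡ j * k i + (i : ℕ) [MOD n] := Nat.ModEq.add_left _ e3
        _ ≡ 0 [MOD n] := e2
    have e5 : j * (k i + 1) ≡ j * k i₀ [MOD n] :=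
      Nat.ModEq.add_right_cancel' (i₀ : ℕ) (e4.trans e1.symm)
    have e6 : (k i + 1) ≡ k i₀ [MOD n] :=
      Nat.ModEq.cancel_left_of_coprime (by rw [Nat.gcd_comm]; exact hj) e5
    have e7 : (k i + 1) % n = k i₀ % n := e6
    rw [Nat.mod_eq_of_lt (hklt i₀)] at e7
    exact e7.symm
  -- column form of T
  have hcol : ∀ i'' : Fin n, (fun a => T a i'') = c₁⁻¹ ^ (k i'') • (A ^ (k i'') *ᵥ v) := by
    intro i''; funext a; rfl
  -- action of A on columns of T
  have hAcol : ∀ i i₀ : Fin n, ((i₀ : ℕ) + j) % n = (i : ℕ) →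
      (A *ᵥ fun a => T a i) = c₁ • (fun a => T a i₀) := by
    intro i i₀ hi
    have hkr := hkrel i i₀ hi
    rw [hcol i, hcol i₀, mulVec_smul, mulVec_mulVec, ← pow_succ']
    by_cases hc : k i + 1 < n
    · have hkk : k i₀ = k i + 1 := by rw [hkr, Nat.mod_eq_of_lt hc]
      rw [hkk, smul_smul]
      congr 1
      rw [pow_succ]
      field_simp
    · have hm : k i + 1 = n := by have := hklt i; omega
      have hkk : k i₀ = 0 := by rw [hkr, hm, Nat.mod_self]
      rw [hkk, hm, hAnv, pow_zero, pow_zero, one_mulVec, smul_smul, smul_smul]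
      congr 1
      rw [mul_one, ← hc₁n, ← hm, pow_succ, inv_pow]
      rw [inv_mul_cancel_left₀ (pow_ne_zero _ hc₁ne)]
  -- A * T = T * (c₁ • U^j)
  have hAT : A * T = T * (c₁ • (weylU n ^ j)) := by
    ext a i
    rw [mul_apply, mul_apply]
    have hlt : ((i : ℕ) + (n - j % n)) % n < n := Nat.mod_lt _ (by omega)
    have hjmod : j % n < n := Nat.mod_lt _ (by omega)
    set i₀ : Fin n := ⟨((i : ℕ) + (n - j % n)) % n, hlt⟩ with hi₀def
    have hi₀j : ((i₀ : ℕ) + j) % n = (i : ℕ) := by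
      show (((i : ℕ) + (n - j % n)) % n + j) % n = (i : ℕ)
      rw [Nat.mod_add_mod]
      have h5 : (i : ℕ) + (n - j % n) + j ≡ (i : ℕ) + (n - j % n) + j % n [MOD n] :=
        Nat.ModEq.add_left _ (Nat.mod_modEq j n).symm
      have h6 : (i : ℕ) + (n - j % n) + j % n = (i : ℕ) + n := by omega
      have h7 : ((i : ℕ) + (n - j % n) + j) % n = ((i : ℕ) + n) % n := by
        rw [h5]; rw [h6]
      rw [h7, Nat.add_mod_right, Nat.mod_eq_of_lt i.isLt]
    have hR : ∑ q, T a q * (c₁ • (weylU n ^ j)) q i = c₁ * T a i₀ := by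
      rw [Finset.sum_eq_single i₀]
      · rw [Matrix.smul_apply, weylU_pow hn, if_pos hi₀j, smul_eq_mul, mul_one, mul_comm]
      · intro b _ hb
        have hU : (weylU n ^ j) b i = 0 := by
          rw [weylU_pow hn, if_neg]
          intro hcon
          apply hb
          apply Fin.ext
          have h9 : ((b : ℕ) + j) % n = ((i₀ : ℕ) + j) % n := by rw [hcon, hi₀j]
          have h10 : (b : ℕ) ≡ (i₀ : ℕ) [MOD n] := Nat.ModEq.add_right_cancel' j h9
          have h11 : (b : ℕ) % n = (i₀ : ℕ) % n := h10
          rwa [Nat.mod_eq_of_lt b.isLt, Nat.mod_eq_of_lt i₀.isLt] at h11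
        rw [Matrix.smul_apply, hU, smul_zero, mul_zero]
      · intro h; exact absurd (Finset.mem_univ _) h
    rw [hR]
    have h8 := congrFun (hAcol i i₀ hi₀j) a
    simpa [mulVec, dotProduct, Pi.smul_apply, smul_eq_mul, mul_comm] using h8
  -- B * T = T * (lam • V)
  have hBT : B * T = T * (lam • weylV n) := by
    have hdiag : lam • weylV n = diagonal (fun q : Fin n => lam * ζ ^ (q : ℕ)) := by
      ext a b
      by_cases h : a = b <;>
        simp [weylV, Matrix.diagonal_apply, h, Matrix.smul_apply, smul_eq_mul, hζdef]
    ext a i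
    have hzeq : (ζ⁻¹) ^ (j * k i) = ζ ^ (i : ℕ) := by
      have h2 : ζ ^ (j * k i + (i : ℕ)) = 1 := (hζ.pow_eq_one_iff_dvd _).mpr (hdvdk i)
      rw [pow_add] at h2
      rw [inv_pow]
      exact inv_eq_of_mul_eq_one_right h2
    have hcolB : B *ᵥ (fun b => T b i) = (lam * ζ ^ (i : ℕ)) • (fun b => T b i) := by
      rw [hcol i, mulVec_smul, hBp (k i), hzeq, smul_smul, smul_smul]
      congr 1
      ring
    have hL : (B * T) a i = (lam * ζ ^ (i : ℕ)) * T a i := by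
      have h := congrFun hcolB a
      simpa [mulVec, dotProduct, mul_apply, Pi.smul_apply, smul_eq_mul] using h
    rw [hL, hdiag, mul_diagonal, mul_comm]
  -- assemble
  refine ⟨Tᴴ, c₁, lam, ?_, hc₁abs, abs_eq_one_of_conj_mul hlam1, ?_, ?_⟩
  · rw [conjTranspose_conjTranspose]; exact hTT
  · rw [conjTranspose_conjTranspose, Matrix.mul_assoc, hAT, ← Matrix.mul_assoc, hTT,
      Matrix.one_mul]
  · rw [conjTranspose_conjTranspose, Matrix.mul_assoc, hBT, ← Matrix.mul_assoc, hTT,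
      Matrix.one_mul]
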